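/- The variety F-Oalg⁰_≤ has pushouts of spans of order-embeddings: every amalgam (C; A, B; φ₁, φ₂), where φ₁ : C → A and φ₂ : C → B are order-embeddings of ordered F-algebras in F-Oalg⁰_≤ with A, B, C pairwise disjoint, can be completed to a pushout A ⨿_C B in F-Oalg⁰_≤. -/

import Mathlib

structure Signature where
  F : Type
  ar : F → ℕ

structure OAlg (S : Signature) where
  carrier : Type
  ops : ∀ f : S.F, (Fin (S.ar f) → carrier) → carrier
  le : carrier → carrier → Prop
  le_refl : ∀ a, le a a
  le_trans : ∀ a b c, le a b → le b c → le a c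
  le_antisymm : ∀ a b, le a b → le b a → a = b
  mono : ∀ (f : S.F) (a b : Fin (S.ar f) → carrier),
    (∀ i, le (a i) (b i)) → le (ops f a) (ops f b)

structure OHom {S : Signature} (A B : OAlg S) where
  toFun : A.carrier → B.carrier
  map_ops : ∀ (f : S.F) (a : Fin (S.ar f) → A.carrier),
    toFun (A.ops f a) = B.ops f (fun i => toFun (a i))
  mono : ∀ x y, A.le x y → B.le (toFun x) (toFun y)

/-- The value in `D` of a constant (nullary operation) symbol `c`. -/
def nullOp {S : Signature} (D : OAlg S) (c : S.F) (h : S.ar c = 0) : D.carrier :=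
  D.ops c (fun i => absurd i.isLt (by omega))

/-- An ordered algebra lies in the variety `F-Oalg⁰_≤` determined by a family `r`
of inequalities `c ≤ d` between constant symbols. -/
def SatIneq {S : Signature} (r : S.F → S.F → Prop) (D : OAlg S) : Prop :=
  ∀ (c d : S.F) (hc : S.ar c = 0) (hd : S.ar d = 0),
    r c d → D.le (nullOp D c hc) (nullOp D d hd)

/-- A homomorphism of ordered algebras is an order-embedding if it reflects the
order. -/
def IsOrderEmbedding {S : Signature} {A B : OAlg S} (f : OHom A B) : Prop :=
  ∀ x y : A.carrier, B.le (f.toFun x) (f.toFun y) → A.le x y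

/-- `(P, μ₁, μ₂)` is a pushout of the span `(φ₁, φ₂)` in the variety
`F-Oalg⁰_≤` determined by `r`. -/
def IsPushout {S : Signature} (r : S.F → S.F → Prop) {C A B : OAlg S}
    (φ₁ : OHom C A) (φ₂ : OHom C B)
    (P : OAlg S) (μ₁ : OHom A P) (μ₂ : OHom B P) : Prop :=
  SatIneq r P ∧
  (∀ c : C.carrier, μ₁.toFun (φ₁.toFun c) = μ₂.toFun (φ₂.toFun c)) ∧
  ∀ D : OAlg S, SatIneq r D → ∀ (γA : OHom A D) (γB : OHom B D),
    (∀ c : C.carrier, γA.toFun (φ₁.toFun c) = γB.toFun (φ₂.toFun c)) →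
    ∃! δ : OHom P D,
      (∀ a : A.carrier, δ.toFun (μ₁.toFun a) = γA.toFun a) ∧
      (∀ b : B.carrier, δ.toFun (μ₂.toFun b) = γB.toFun b)

namespace AmalgamPushout

/-- Terms over a set `V` of variables. -/
inductive Tm (S : Signature) (V : Type) : Type
  | var : V → Tm S V
  | op : (f : S.F) → (Fin (S.ar f) → Tm S V) → Tm S V

variable {S : Signature} {C A B : OAlg S}

/-- The preorder-congruence generated by the amalgam data. -/
inductive Rel (φ₁ : OHom C A) (φ₂ : OHom C B) :
    Tm S (A.carrier ⊕ B.carrier) → Tm S (A.carrier ⊕ B.carrier) → Prop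
  | refl (t) : Rel φ₁ φ₂ t t
  | trans {t u v} : Rel φ₁ φ₂ t u → Rel φ₁ φ₂ u v → Rel φ₁ φ₂ t v
  | compat (f) (a b : Fin (S.ar f) → Tm S (A.carrier ⊕ B.carrier)) :
      (∀ i, Rel φ₁ φ₂ (a i) (b i)) → Rel φ₁ φ₂ (.op f a) (.op f b)
  | leA {x y} : A.le x y → Rel φ₁ φ₂ (.var (.inl x)) (.var (.inl y))
  | leB {x y} : B.le x y → Rel φ₁ φ₂ (.var (.inr x)) (.var (.inr y))
  | opA (f) (a : Fin (S.ar f) → A.carrier) :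
      Rel φ₁ φ₂ (.op f fun i => .var (.inl (a i))) (.var (.inl (A.ops f a)))
  | opA' (f) (a : Fin (S.ar f) → A.carrier) :
      Rel φ₁ φ₂ (.var (.inl (A.ops f a))) (.op f fun i => .var (.inl (a i)))
  | opB (f) (b : Fin (S.ar f) → B.carrier) :
      Rel φ₁ φ₂ (.op f fun i => .var (.inr (b i))) (.var (.inr (B.ops f b)))
  | opB' (f) (b : Fin (S.ar f) → B.carrier) :
      Rel φ₁ φ₂ (.var (.inr (B.ops f b))) (.op f fun i => .var (.inr (b i)))
  | glue (c) : Rel φ₁ φ₂ (.var (.inl (φ₁.toFun c))) (.var (.inr (φ₂.toFun c)))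
  | glue' (c) : Rel φ₁ φ₂ (.var (.inr (φ₂.toFun c))) (.var (.inl (φ₁.toFun c)))

variable (φ₁ : OHom C A) (φ₂ : OHom C B)

def tsetoid : Setoid (Tm S (A.carrier ⊕ B.carrier)) where
  r x y := Rel φ₁ φ₂ x y ∧ Rel φ₁ φ₂ y x
  iseqv := ⟨fun t => ⟨.refl t, .refl t⟩, fun h => ⟨h.2, h.1⟩,
    fun h h' => ⟨h.1.trans h'.1, h'.2.trans h.2⟩⟩

/-- The pushout algebra. -/
noncomputable def P : OAlg S where
  carrier := Quotient (tsetoid φ₁ φ₂)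
  ops f a := Quotient.mk _ (.op f fun i => (a i).out)
  le := Quotient.lift₂ (Rel φ₁ φ₂) (by
    intro a b a' b' ha hb
    exact propext ⟨fun h => ha.2.trans (h.trans hb.1),
      fun h => ha.1.trans (h.trans hb.2)⟩)
  le_refl := by rintro ⟨t⟩; exact Rel.refl t
  le_trans := by rintro ⟨a⟩ ⟨b⟩ ⟨c⟩ h h'; exact h.trans h'
  le_antisymm := by rintro ⟨a⟩ ⟨b⟩ h h'; exact Quotient.sound ⟨h, h'⟩
  mono f a b h := by
    apply Rel.compat
    intro i
    have := h i
    rw [← Quotient.out_eq (a i), ← Quotient.out_eq (b i)] at this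
    exact this

lemma mk_op (f : S.F) (a : Fin (S.ar f) → Tm S (A.carrier ⊕ B.carrier)) :
    (P φ₁ φ₂).ops f (fun i => Quotient.mk _ (a i)) = Quotient.mk _ (.op f a) := by
  apply Quotient.sound
  have h : ∀ i, (tsetoid φ₁ φ₂).r (Quotient.mk (tsetoid φ₁ φ₂) (a i)).out (a i) :=
    fun i => Quotient.exact (Quotient.out_eq _)
  exact ⟨Rel.compat f _ _ fun i => (h i).1, Rel.compat f _ _ fun i => (h i).2⟩

/-- Evaluation of terms in a target algebra, given a valuation of variables. -/
def ev (D : OAlg S) (v : A.carrier ⊕ B.carrier → D.carrier) :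
    Tm S (A.carrier ⊕ B.carrier) → D.carrier
  | .var x => v x
  | .op f a => D.ops f fun i => ev D v (a i)

lemma ev_rel (D : OAlg S) (γA : OHom A D) (γB : OHom B D)
    (hγ : ∀ c : C.carrier, γA.toFun (φ₁.toFun c) = γB.toFun (φ₂.toFun c))
    {t u : Tm S (A.carrier ⊕ B.carrier)} (h : Rel φ₁ φ₂ t u) :
    D.le (ev D (Sum.elim γA.toFun γB.toFun) t) (ev D (Sum.elim γA.toFun γB.toFun) u) := by
  induction h with
  | refl t => exact D.le_refl _
  | trans _ _ ih ih' => exact D.le_trans _ _ _ ih ih'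
  | compat f a b _ ih => exact D.mono f _ _ ih
  | leA h => exact γA.mono _ _ h
  | leB h => exact γB.mono _ _ h
  | opA f a => simp [ev, γA.map_ops]; exact D.le_refl _
  | opA' f a => simp [ev, γA.map_ops]; exact D.le_refl _
  | opB f b => simp [ev, γB.map_ops]; exact D.le_refl _
  | opB' f b => simp [ev, γB.map_ops]; exact D.le_refl _
  | glue c => simp [ev, hγ c]; exact D.le_refl _
  | glue' c => simp [ev, hγ c]; exact D.le_refl _

lemma nullOp_hom {A B : OAlg S} (h : OHom A B) (c : S.F) (hc : S.ar c = 0) :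
    h.toFun (nullOp A c hc) = nullOp B c hc := by
  unfold nullOp
  rw [h.map_ops]
  congr 1
  funext i
  exact absurd i.isLt (by omega)

lemma OHom.ext' {A B : OAlg S} {f g : OHom A B}
    (h : ∀ x, f.toFun x = g.toFun x) : f = g := by
  cases f; cases g
  simp only [OHom.mk.injEq]
  exact funext h

end AmalgamPushout

/-- The variety `F-Oalg⁰_≤` has pushouts of spans of order-embeddings: every
amalgam `(C; A, B; φ₁, φ₂)` of ordered algebras in the variety can be completed
to a pushout `A ⨿_C B` in the variety. -/
theorem amalgam_pushout_exists {S : Signature} (r : S.F → S.F → Prop)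
    (C A B : OAlg S) (hC : SatIneq r C) (hA : SatIneq r A) (hB : SatIneq r B)
    (φ₁ : OHom C A) (φ₂ : OHom C B)
    (h₁ : IsOrderEmbedding φ₁) (h₂ : IsOrderEmbedding φ₂) :
    ∃ (P : OAlg S) (μ₁ : OHom A P) (μ₂ : OHom B P),
      IsPushout r φ₁ φ₂ P μ₁ μ₂ := by
  classical
  open AmalgamPushout in
  refine ⟨AmalgamPushout.P φ₁ φ₂,
    ⟨fun a => Quotient.mk _ (.var (.inl a)), ?_, fun x y h => Rel.leA h⟩,
    ⟨fun b => Quotient.mk _ (.var (.inr b)), ?_, fun x y h => Rel.leB h⟩,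
    ?_, ?_, ?_⟩
  · intro f a
    rw [mk_op]
    exact Quotient.sound ⟨Rel.opA' f a, Rel.opA f a⟩
  · intro f b
    rw [mk_op]
    exact Quotient.sound ⟨Rel.opB' f b, Rel.opB f b⟩
  · -- SatIneq
    intro c d hc hd hr
    have e1 : (nullOp (AmalgamPushout.P φ₁ φ₂) c hc) =
        Quotient.mk _ (Tm.var (Sum.inl (nullOp A c hc))) := by
      exact (nullOp_hom (B := AmalgamPushout.P φ₁ φ₂)
        ⟨fun a => Quotient.mk _ (.var (.inl a)),
          fun f a => by rw [mk_op]; exact Quotient.sound ⟨Rel.opA' f a, Rel.opA f a⟩,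
          fun x y h => Rel.leA h⟩ c hc).symm
    have e2 : (nullOp (AmalgamPushout.P φ₁ φ₂) d hd) =
        Quotient.mk _ (Tm.var (Sum.inl (nullOp A d hd))) := by
      exact (nullOp_hom (B := AmalgamPushout.P φ₁ φ₂)
        ⟨fun a => Quotient.mk _ (.var (.inl a)),
          fun f a => by rw [mk_op]; exact Quotient.sound ⟨Rel.opA' f a, Rel.opA f a⟩,
          fun x y h => Rel.leA h⟩ d hd).symm
    rw [e1, e2]
    exact Rel.leA (hA c d hc hd hr)
  · -- commutativity
    intro c
    exact Quotient.sound ⟨Rel.glue c, Rel.glue' c⟩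
  · -- universal property
    intro D hD γA γB hγ
    set v := Sum.elim γA.toFun γB.toFun with hv
    have hlift : ∀ a b, (tsetoid φ₁ φ₂).r a b → ev D v a = ev D v b := fun a b hab =>
      D.le_antisymm _ _ (ev_rel φ₁ φ₂ D γA γB hγ hab.1) (ev_rel φ₁ φ₂ D γA γB hγ hab.2)
    refine ⟨⟨Quotient.lift (ev D v) hlift, ?_, ?_⟩, ⟨fun a => rfl, fun b => rfl⟩, ?_⟩
    · intro f a
      show ev D v (.op f fun i => (a i).out) = _
      show D.ops f (fun i => ev D v ((a i).out)) = _
      congr 1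
      funext i
      conv_rhs => rw [← Quotient.out_eq (a i)]
      exact (Quotient.lift_mk _ hlift _).symm
    · rintro ⟨x⟩ ⟨y⟩ h
      exact ev_rel φ₁ φ₂ D γA γB hγ h
    · rintro δ' ⟨hδA, hδB⟩
      apply OHom.ext'
      rintro ⟨t⟩
      show δ'.toFun (Quotient.mk _ t) = ev D v t
      induction t with
      | var x =>
        cases x with
        | inl a => exact hδA a
        | inr b => exact hδB b
      | op f ts ih =>
        rw [← mk_op]
        refine (δ'.map_ops f _).trans ?_
        show D.ops f _ = D.ops f _
        congr 1
        funext i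
        exact ih i
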